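/- Let Ω ⊂ ℝ³ be a bounded measurable set with diameter R, and let H(p,q) ∈ ℝ³ be defined for q ∈ Ω and p in the convex hull of Ω with p ≠ q, such that for each fixed q the map p ↦ H(p,q) is differentiable on (conv Ω) \ {q}, with |H(p,q)| ≤ C |p−q|⁻² and |D_p H(p,q)| ≤ C |p−q|⁻³ for all p ≠ q, where C > 0 is a constant. Then there exists a constant C′ depending only on C and R such that for all p₁, p₂ ∈ Ω, ∫_Ω |H(p₁,q) − H(p₂,q)| dq ≤ C′ λ(|p₁ − p₂|). -/

import Mathlib

open MeasureTheory

open MeasureTheory Set Metric Module intervalIntegral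

local notation "E3" => EuclideanSpace ℝ (Fin 3)

section Aux

variable {E : Type*} [NormedAddCommGroup E] [NormedSpace ℝ E] [Nontrivial E]
  [MeasurableSpace E] [FiniteDimensional ℝ E] [BorelSpace E]
  (μ : Measure E) [μ.IsAddHaarMeasure]

lemma lintegral_fun_norm_addHaar' (g : ℝ → ENNReal) (hg : Measurable g) :
    ∫⁻ x, g ‖x‖ ∂μ = (finrank ℝ E) * μ (ball 0 1) *
      ∫⁻ y in Ioi (0 : ℝ), ENNReal.ofReal (y ^ (finrank ℝ E - 1)) * g y := by
  have h1 : ∫⁻ x, g ‖x‖ ∂μ = ∫⁻ x : ({0}ᶜ : Set E), g ‖x.1‖ ∂(μ.comap (↑)) := by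
    rw [lintegral_subtype_comap (measurableSet_singleton (0:E)).compl (fun x => g ‖x‖),
      MeasureTheory.restrict_compl_singleton]
  have h2 : ∫⁻ x : ({0}ᶜ : Set E), g ‖x.1‖ ∂(μ.comap (↑))
      = ∫⁻ x : sphere (0 : E) 1 × Ioi (0 : ℝ), g x.2
        ∂(μ.toSphere.prod (.volumeIoiPow (finrank ℝ E - 1))) := by
    have h := μ.measurePreserving_homeomorphUnitSphereProd.lintegral_comp_emb
      (Homeomorph.measurableEmbedding _) (fun x => g x.2)
    rw [← h]; simp [homeomorphUnitSphereProd]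
  have h3 := lintegral_prod (μ := μ.toSphere)
      (ν := .volumeIoiPow (finrank ℝ E - 1)) (fun x => g x.2.1)
      (hg.comp (measurable_subtype_coe.comp measurable_snd)).aemeasurable
  have h4 := lintegral_withDensity_eq_lintegral_mul (Measure.comap Subtype.val volume)
      (f := fun r : Ioi (0:ℝ) => ENNReal.ofReal (r.1 ^ (finrank ℝ E - 1)))
      ((measurable_subtype_coe.pow_const _).ennreal_ofReal)
      (g := fun y : Ioi (0:ℝ) => g y.1) (hg.comp measurable_subtype_coe)
  have h5 := lintegral_subtype_comap (μ := (volume : Measure ℝ)) (s := Ioi (0:ℝ))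
      measurableSet_Ioi (fun y : ℝ => ENNReal.ofReal (y ^ (finrank ℝ E - 1)) * g y)
  rw [h1, h2, h3]
  simp only [lintegral_const]
  rw [show (Measure.volumeIoiPow (finrank ℝ E - 1))
      = (Measure.comap Subtype.val volume).withDensity
        (fun r : Ioi (0:ℝ) => ENNReal.ofReal (r.1 ^ (finrank ℝ E - 1))) from rfl] at *
  rw [h4] at *
  rw [show ((fun r : Ioi (0:ℝ) => ENNReal.ofReal (r.1 ^ (finrank ℝ E - 1))) *
      fun y : Ioi (0:ℝ) => g y.1)
      = fun y : Ioi (0:ℝ) => ENNReal.ofReal (y.1 ^ (finrank ℝ E - 1)) * g y.1 from rfl, h5,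
    Measure.toSphere_apply_univ]
  ring

end Aux

lemma polar3 (g : ℝ → ENNReal) (hg : Measurable g) :
    ∫⁻ x : E3, g ‖x‖ = 3 * volume (ball (0:E3) 1) *
      ∫⁻ y in Ioi (0 : ℝ), ENNReal.ofReal (y ^ 2) * g y := by
  have := lintegral_fun_norm_addHaar' (volume : Measure E3) g hg
  rwa [finrank_euclideanSpace_fin] at this

lemma transl (p : E3) (g : ℝ → ENNReal) :
    ∫⁻ q : E3, g ‖q - p‖ = ∫⁻ x : E3, g ‖x‖ :=
  lintegral_sub_right_eq_self (fun x => g ‖x‖) p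

lemma near_bound (p : E3) (c ρ : ℝ) :
    ∫⁻ q : E3, (ball p ρ).indicator (fun q => ENNReal.ofReal (c * (‖p - q‖ ^ 2)⁻¹)) q
      = 3 * volume (ball (0:E3) 1) * (ENNReal.ofReal c * ENNReal.ofReal ρ) := by
  have hpt : ∀ q : E3, (ball p ρ).indicator (fun q => ENNReal.ofReal (c * (‖p - q‖ ^ 2)⁻¹)) q
      = (Iio ρ).indicator (fun y => ENNReal.ofReal (c * (y ^ 2)⁻¹)) ‖q - p‖ := by
    intro q
    by_cases hq : q ∈ ball p ρ
    · rw [indicator_of_mem hq, indicator_of_mem (by simpa [dist_eq_norm] using hq),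
        norm_sub_rev]
    · rw [indicator_of_notMem hq, indicator_of_notMem (by simpa [dist_eq_norm] using hq)]
  rw [lintegral_congr hpt, transl p _, polar3 _ (by
    exact Measurable.indicator (by fun_prop) measurableSet_Iio)]
  congr 1
  have : ∀ y ∈ Ioi (0:ℝ), ENNReal.ofReal (y ^ 2) *
      (Iio ρ).indicator (fun y => ENNReal.ofReal (c * (y ^ 2)⁻¹)) y
      = (Ioo 0 ρ).indicator (fun _ => ENNReal.ofReal c) y := by
    intro y hy
    by_cases h : y < ρ
    · rw [indicator_of_mem (by exact h), indicator_of_mem (mem_Ioo.2 ⟨mem_Ioi.1 hy, h⟩),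
        ← ENNReal.ofReal_mul (by positivity)]
      congr 1
      have hy0 : (0:ℝ) < y := hy
      field_simp
    · rw [indicator_of_notMem (by simpa using h),
        indicator_of_notMem (fun hmem => h (mem_Ioo.1 hmem).2), mul_zero]
  rw [setLIntegral_congr_fun measurableSet_Ioi this]
  rw [lintegral_indicator measurableSet_Ioo, Measure.restrict_restrict measurableSet_Ioo,
    setLIntegral_const]
  have : Ioo (0:ℝ) ρ ∩ Ioi 0 = Ioo 0 ρ := by
    apply inter_eq_left.2; intro x hx; exact (mem_Ioo.1 hx).1
  rw [this, Real.volume_Ioo, sub_zero]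

lemma far_bound (p : E3) (a b c : ℝ) (ha : 0 < a) (hab : a ≤ b) (hc : 0 ≤ c) :
    ∫⁻ q : E3, ({q : E3 | ‖q - p‖ ∈ Icc a b}).indicator
        (fun q => ENNReal.ofReal (c * (‖p - q‖ ^ 3)⁻¹)) q
      = 3 * volume (ball (0:E3) 1) *
        (ENNReal.ofReal c * ENNReal.ofReal (Real.log b - Real.log a)) := by
  have hpt : ∀ q : E3, ({q : E3 | ‖q - p‖ ∈ Icc a b}).indicator
      (fun q => ENNReal.ofReal (c * (‖p - q‖ ^ 3)⁻¹)) q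
      = (Icc a b).indicator (fun y => ENNReal.ofReal (c * (y ^ 3)⁻¹)) ‖q - p‖ := by
    intro q
    by_cases hq : ‖q - p‖ ∈ Icc a b
    · rw [indicator_of_mem (by exact hq), indicator_of_mem hq, norm_sub_rev]
    · rw [indicator_of_notMem (by exact hq), indicator_of_notMem hq]
  rw [lintegral_congr hpt, transl p _, polar3 _
    (Measurable.indicator (by fun_prop) measurableSet_Icc)]
  congr 1
  have h1 : ∀ y ∈ Ioi (0:ℝ), ENNReal.ofReal (y ^ 2) *
      (Icc a b).indicator (fun y => ENNReal.ofReal (c * (y ^ 3)⁻¹)) y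
      = (Icc a b).indicator (fun y => ENNReal.ofReal (c * y⁻¹)) y := by
    intro y hy
    have hy0 : (0:ℝ) < y := hy
    by_cases h : y ∈ Icc a b
    · rw [indicator_of_mem h, indicator_of_mem h, ← ENNReal.ofReal_mul (by positivity)]
      congr 1
      field_simp
    · rw [indicator_of_notMem h, indicator_of_notMem h, mul_zero]
  rw [setLIntegral_congr_fun measurableSet_Ioi h1,
    lintegral_indicator measurableSet_Icc, Measure.restrict_restrict measurableSet_Icc,
    show Icc a b ∩ Ioi 0 = Icc a b from inter_eq_left.2 (fun x hx => lt_of_lt_of_le ha hx.1)]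
  have hint : IntegrableOn (fun y : ℝ => c * y⁻¹) (Icc a b) := by
    apply ContinuousOn.integrableOn_Icc
    exact continuousOn_const.mul (continuousOn_id.inv₀ (fun x hx => (lt_of_lt_of_le ha hx.1).ne'))
  rw [← ofReal_integral_eq_lintegral_ofReal hint
    (ae_restrict_of_forall_mem measurableSet_Icc (fun y (hy : y ∈ Icc a b) => by
      have h0y : (0:ℝ) < y := lt_of_lt_of_le ha hy.1
      have : (0:ℝ) ≤ c * y⁻¹ := by positivity
      exact this))]
  rw [MeasureTheory.integral_Icc_eq_integral_Ioc, ← _root_.intervalIntegral.integral_of_le hab,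
    _root_.intervalIntegral.integral_const_mul,
    integral_inv_of_pos ha (lt_of_lt_of_le ha hab),
    Real.log_div (ne_of_gt (lt_of_lt_of_le ha hab)) (ne_of_gt ha),
    ENNReal.ofReal_mul hc]


/-- The quasi-Lipschitz modulus: `λ(d) = d (1 - log d)` for `0 ≤ d < 1`
and `λ(d) = 1` for `d ≥ 1`. -/
noncomputable def qlLambda (d : ℝ) : ℝ := if 1 ≤ d then 1 else d * (1 - Real.log d)


lemma qlLambda_nonneg {d : ℝ} (hd : 0 ≤ d) : 0 ≤ qlLambda d := by
  unfold qlLambda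
  split_ifs with h
  · norm_num
  · have : Real.log d ≤ 0 := Real.log_nonpos hd (le_of_not_ge h)
    nlinarith

lemma final_real (C Br R d : ℝ) (hC : 0 < C) (hBr : 0 ≤ Br) (hd : 0 < d) (hdR : d ≤ R) :
    3*Br*(C*(2*d)) + 3*Br*(C*(3*d))
      + 3*Br*(8*C*d*(max 0 (Real.log R - Real.log (2*d))))
    ≤ (24*C*Br*(1+R)*((max 0 (Real.log R))+1) + 15*C*Br*(1+R) + 1) * qlLambda d := by
  have hR : 0 < R := lt_of_lt_of_le hd hdR
  set M := max 0 (Real.log R) with hM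
  set m := max 0 (Real.log R - Real.log (2*d)) with hm
  have hM0 : 0 ≤ M := le_max_left _ _
  have hm0 : 0 ≤ m := le_max_left _ _
  have hlogRM : Real.log R ≤ M := le_max_right _ _
  have hlog2 : (0:ℝ) ≤ Real.log 2 := Real.log_nonneg (by norm_num)
  have hlog2d : Real.log (2*d) = Real.log 2 + Real.log d :=
    Real.log_mul (by norm_num) (ne_of_gt hd)
  by_cases h1 : 1 ≤ d
  · rw [qlLambda, if_pos h1]
    have hlogd : 0 ≤ Real.log d := Real.log_nonneg h1
    have hmM : m ≤ M := by
      rw [hm]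
      apply max_le hM0
      calc Real.log R - Real.log (2*d) ≤ Real.log R := by rw [hlog2d]; linarith
        _ ≤ M := hlogRM
    have h2 : d ≤ 1 + R := by linarith
    nlinarith [mul_nonneg (mul_nonneg hC.le hBr) hM0, mul_nonneg hC.le hBr,
      mul_nonneg (mul_nonneg (mul_nonneg hC.le hBr) hd.le) (sub_nonneg.2 hmM),
      mul_nonneg (mul_nonneg hC.le hBr) (mul_nonneg hd.le hM0),
      mul_nonneg (mul_nonneg (mul_nonneg hC.le hBr) hM0) (by linarith : (0:ℝ) ≤ 1 + R - d),
      mul_nonneg (mul_nonneg hC.le hBr) (by linarith : (0:ℝ) ≤ 1 + R - d)]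
  · rw [qlLambda, if_neg h1]
    push_neg at h1
    have hlogd : Real.log d < 0 := Real.log_neg hd h1
    set L := 1 - Real.log d with hL
    have hL1 : 1 ≤ L := by rw [hL]; linarith
    have hmle : m ≤ M - Real.log d := by
      rw [hm]
      apply max_le (by linarith)
      rw [hlog2d]; linarith
    have hRnn : (0:ℝ) ≤ R := hR.le
    have hdm : d * m ≤ (M+1) * (d*L) := by
      have h1' : d * m ≤ d * (M - Real.log d) := by
        apply mul_le_mul_of_nonneg_left hmle hd.le
      have h2' : d * (M - Real.log d) ≤ (M+1)*(d*L) := by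
        have e1 : -Real.log d ≤ L := by rw [hL]; linarith
        nlinarith [mul_nonneg hd.le hM0,
          mul_nonneg (mul_nonneg hd.le hM0) (by linarith : (0:ℝ) ≤ L - 1)]
      linarith
    have hdL : d ≤ d * L := by nlinarith
    have hdL0 : 0 < d * L := by nlinarith
    have hKnn : 0 ≤ C * Br := mul_nonneg hC.le hBr
    nlinarith [mul_nonneg hKnn (mul_nonneg hRnn hdL0.le),
      mul_le_mul_of_nonneg_left hdm hKnn,
      mul_nonneg hKnn (mul_nonneg hRnn (mul_nonneg (by linarith : (0:ℝ) ≤ M+1) hdL0.le)),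
      mul_nonneg hKnn (sub_nonneg.2 hdL),
      mul_nonneg hKnn (mul_nonneg hRnn (sub_nonneg.2 hdL))]


/-- Quasi-Lipschitz integral estimate for a kernel `H(p,q) ∈ ℝ³` on a bounded measurable
`Ω ⊆ ℝ³` of diameter `R`: if for each `q ∈ Ω` the map `p ↦ H(p,q)` is differentiable on
`(conv Ω) \ {q}` with `|H(p,q)| ≤ C |p-q|⁻²` and `|D_p H(p,q)| ≤ C |p-q|⁻³`, then there is
a constant `C'` (depending only on `C` and `R`) such that for all `p₁, p₂ ∈ Ω`,
`∫_Ω |H(p₁,q) - H(p₂,q)| dq ≤ C' λ(|p₁ - p₂|)`. -/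
theorem kernel_quasiLipschitz_integral_estimate
    (Ω : Set (EuclideanSpace ℝ (Fin 3))) (hmeas : MeasurableSet Ω)
    (hbdd : Bornology.IsBounded Ω) (R : ℝ) (hR : Metric.diam Ω = R)
    (C : ℝ) (hC : 0 < C)
    (H : EuclideanSpace ℝ (Fin 3) → EuclideanSpace ℝ (Fin 3) → EuclideanSpace ℝ (Fin 3))
    (H' : EuclideanSpace ℝ (Fin 3) → EuclideanSpace ℝ (Fin 3) →
      (EuclideanSpace ℝ (Fin 3) →L[ℝ] EuclideanSpace ℝ (Fin 3)))
    (hHmeas : ∀ p, AEStronglyMeasurable (fun q => H p q) (volume.restrict Ω))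
    (hdiff : ∀ q ∈ Ω, ∀ p ∈ (convexHull ℝ Ω) \ {q},
      HasFDerivWithinAt (fun p' => H p' q) (H' p q) ((convexHull ℝ Ω) \ {q}) p)
    (hH : ∀ q ∈ Ω, ∀ p ∈ convexHull ℝ Ω, p ≠ q → ‖H p q‖ ≤ C * (‖p - q‖ ^ 2)⁻¹)
    (hH' : ∀ q ∈ Ω, ∀ p ∈ convexHull ℝ Ω, p ≠ q → ‖H' p q‖ ≤ C * (‖p - q‖ ^ 3)⁻¹) :
    ∃ C' > (0 : ℝ), ∀ p₁ ∈ Ω, ∀ p₂ ∈ Ω,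
      (∫ q in Ω, ‖H p₁ q - H p₂ q‖) ≤ C' * qlLambda ‖p₁ - p₂‖ := by
  have hRnn : 0 ≤ R := hR ▸ Metric.diam_nonneg
  set Br : ℝ := (volume (ball (0:E3) 1)).toReal with hBrdef
  have hBr : 0 ≤ Br := ENNReal.toReal_nonneg
  set M : ℝ := max 0 (Real.log R) with hMdef
  have hM0 : (0:ℝ) ≤ M := le_max_left _ _
  set C' : ℝ := 24*C*Br*(1+R)*(M+1) + 15*C*Br*(1+R) + 1 with hC'def
  have hC'pos : 0 < C' := by
    have h1 : (0:ℝ) ≤ 24*C*Br*(1+R)*(M+1) := by positivity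
    have h2 : (0:ℝ) ≤ 15*C*Br*(1+R) := by positivity
    linarith
  refine ⟨C', hC'pos, fun p₁ hp₁ p₂ hp₂ => ?_⟩
  set d : ℝ := ‖p₁ - p₂‖ with hddef
  by_cases hd0 : d = 0
  · have hpp : p₁ = p₂ := by
      have := norm_eq_zero.1 hd0
      exact sub_eq_zero.1 this
    subst hpp
    simp only [sub_self, norm_zero, integral_zero]
    exact mul_nonneg hC'pos.le (qlLambda_nonneg (norm_nonneg _))
  have hd : 0 < d := lt_of_le_of_ne (norm_nonneg _) (Ne.symm hd0)
  have hdR : d ≤ R := by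
    rw [hddef, ← dist_eq_norm, ← hR]
    exact Metric.dist_le_diam_of_mem hbdd hp₁ hp₂
  have hp₁c : p₁ ∈ convexHull ℝ Ω := subset_convexHull ℝ Ω hp₁
  have hp₂c : p₂ ∈ convexHull ℝ Ω := subset_convexHull ℝ Ω hp₂
  -- the dominating functions
  set f₁ : E3 → ENNReal := fun q => ENNReal.ofReal (C * (‖p₁ - q‖ ^ 2)⁻¹) with hf₁
  set f₂ : E3 → ENNReal := fun q => ENNReal.ofReal (C * (‖p₂ - q‖ ^ 2)⁻¹) with hf₂
  set f₃ : E3 → ENNReal := fun q => ENNReal.ofReal ((8*C*d) * (‖p₁ - q‖ ^ 3)⁻¹) with hf₃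
  set G : E3 → ENNReal := fun q =>
    (ball p₁ (2*d)).indicator f₁ q + (ball p₁ (2*d)).indicator f₂ q +
      ({q : E3 | ‖q - p₁‖ ∈ Icc (2*d) R}).indicator f₃ q with hG
  -- a.e. pointwise bound
  have haegen : ∀ᵐ q ∂(volume.restrict Ω), q ∉ ({p₁, p₂} : Set E3) :=
    ae_restrict_of_ae (((Set.finite_singleton p₂).insert p₁).countable.ae_notMem _)
  have haeb : ∀ᵐ q ∂(volume.restrict Ω),
      ENNReal.ofReal ‖H p₁ q - H p₂ q‖ ≤ G q := by
    filter_upwards [ae_restrict_mem hmeas, haegen] with q hqΩ hq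
    have hq1 : q ≠ p₁ := fun h => hq (by simp [h])
    have hq2 : q ≠ p₂ := fun h => hq (by simp [h])
    by_cases hnear : ‖q - p₁‖ < 2*d
    · -- near region
      have hqball : q ∈ ball p₁ (2*d) := by
        rw [mem_ball, dist_eq_norm]; exact hnear
      have hb1 : ‖H p₁ q‖ ≤ C * (‖p₁ - q‖ ^ 2)⁻¹ := hH q hqΩ p₁ hp₁c (Ne.symm hq1)
      have hb2 : ‖H p₂ q‖ ≤ C * (‖p₂ - q‖ ^ 2)⁻¹ := hH q hqΩ p₂ hp₂c (Ne.symm hq2)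
      have : ENNReal.ofReal ‖H p₁ q - H p₂ q‖
          ≤ (ball p₁ (2*d)).indicator f₁ q + (ball p₁ (2*d)).indicator f₂ q := by
        rw [indicator_of_mem hqball, indicator_of_mem hqball, hf₁, hf₂,
          ← ENNReal.ofReal_add (by positivity) (by positivity)]
        apply ENNReal.ofReal_le_ofReal
        calc ‖H p₁ q - H p₂ q‖ ≤ ‖H p₁ q‖ + ‖H p₂ q‖ := norm_sub_le _ _
          _ ≤ _ := add_le_add hb1 hb2
      calc ENNReal.ofReal ‖H p₁ q - H p₂ q‖
          ≤ (ball p₁ (2*d)).indicator f₁ q + (ball p₁ (2*d)).indicator f₂ q := this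
        _ ≤ G q := le_self_add
    · -- far region: mean value estimate on the segment
      push_neg at hnear
      have hqmem : q ∈ {q : E3 | ‖q - p₁‖ ∈ Icc (2*d) R} := by
        refine ⟨hnear, ?_⟩
        rw [← dist_eq_norm, ← hR]
        exact Metric.dist_le_diam_of_mem hbdd hqΩ hp₁
      have hqp₁ : 0 < ‖q - p₁‖ := lt_of_lt_of_le (by linarith) hnear
      -- segment facts
      have hsegd : ∀ x ∈ segment ℝ p₁ p₂, ‖x - p₁‖ ≤ d := by
        rintro x ⟨a, b, ha, hb, hab, rfl⟩
        have ha' : a = 1 - b := by linarith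
        subst ha'
        have : (1 - b) • p₁ + b • p₂ - p₁ = b • (p₂ - p₁) := by
          rw [sub_smul, one_smul, smul_sub]; abel
        rw [this, norm_smul, Real.norm_eq_abs, abs_of_nonneg hb, hddef, norm_sub_rev]
        nlinarith [norm_nonneg (p₂ - p₁)]
      have hxq : ∀ x ∈ segment ℝ p₁ p₂, ‖q - p₁‖ / 2 ≤ ‖x - q‖ := by
        intro x hx
        have h1 : ‖q - p₁‖ ≤ ‖q - x‖ + ‖x - p₁‖ := by
          have := norm_add_le (q - x) (x - p₁)
          simpa using this
        have h2 : ‖x - p₁‖ ≤ d := hsegd x hx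
        rw [norm_sub_rev q x] at h1
        linarith
      have hsub : segment ℝ p₁ p₂ ⊆ (convexHull ℝ Ω) \ {q} := by
        intro x hx
        refine ⟨(convex_convexHull ℝ Ω).segment_subset hp₁c hp₂c hx, ?_⟩
        intro hxq'
        rw [mem_singleton_iff] at hxq'
        subst hxq'
        have := hxq x hx
        simp at this
        linarith
      have hbound : ∀ x ∈ segment ℝ p₁ p₂, ‖H' x q‖ ≤ 8*C*(‖p₁ - q‖ ^ 3)⁻¹ := by
        intro x hx
        have hxconv := (hsub hx).1
        have hxne : x ≠ q := fun h => (hsub hx).2 (by simp [h])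
        have h1 : ‖H' x q‖ ≤ C * (‖x - q‖ ^ 3)⁻¹ := hH' q hqΩ x hxconv hxne
        have h2 : ‖q - p₁‖ / 2 ≤ ‖x - q‖ := hxq x hx
        have h3 : (‖x - q‖ ^ 3)⁻¹ ≤ ((‖q - p₁‖ / 2) ^ 3)⁻¹ := by
          apply inv_anti₀ (by positivity)
          exact pow_le_pow_left₀ (by positivity) h2 3
        have h4 : ((‖q - p₁‖ / 2) ^ 3)⁻¹ = 8 * (‖q - p₁‖ ^ 3)⁻¹ := by
          field_simp
          ring
        rw [show ‖p₁ - q‖ = ‖q - p₁‖ from norm_sub_rev _ _]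
        calc ‖H' x q‖ ≤ C * (‖x - q‖ ^ 3)⁻¹ := h1
          _ ≤ C * ((‖q - p₁‖ / 2) ^ 3)⁻¹ := by
              apply mul_le_mul_of_nonneg_left h3 hC.le
          _ = 8*C*(‖q - p₁‖ ^ 3)⁻¹ := by rw [h4]; ring
      have hmvt : ‖H p₁ q - H p₂ q‖ ≤ (8*C*(‖p₁ - q‖ ^ 3)⁻¹) * ‖p₁ - p₂‖ :=
        Convex.norm_image_sub_le_of_norm_hasFDerivWithin_le
          (fun x hx => (hdiff q hqΩ x (hsub hx)).mono hsub)
          hbound (convex_segment p₁ p₂)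
          (right_mem_segment ℝ p₁ p₂) (left_mem_segment ℝ p₁ p₂)
      have : ENNReal.ofReal ‖H p₁ q - H p₂ q‖
          ≤ ({q : E3 | ‖q - p₁‖ ∈ Icc (2*d) R}).indicator f₃ q := by
        rw [indicator_of_mem hqmem, hf₃]
        apply ENNReal.ofReal_le_ofReal
        calc ‖H p₁ q - H p₂ q‖ ≤ (8*C*(‖p₁ - q‖ ^ 3)⁻¹) * ‖p₁ - p₂‖ := hmvt
          _ = (8*C*d) * (‖p₁ - q‖ ^ 3)⁻¹ := by rw [← hddef]; ring
      calc ENNReal.ofReal ‖H p₁ q - H p₂ q‖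
          ≤ ({q : E3 | ‖q - p₁‖ ∈ Icc (2*d) R}).indicator f₃ q := this
        _ ≤ G q := le_add_self
  -- measurability of the pieces
  have hmf₁ : Measurable ((ball p₁ (2*d)).indicator f₁) := by
    apply Measurable.indicator _ measurableSet_ball
    rw [hf₁]; fun_prop
  have hmf₂ : Measurable ((ball p₁ (2*d)).indicator f₂) := by
    apply Measurable.indicator _ measurableSet_ball
    rw [hf₂]; fun_prop
  -- the lintegral bounds
  have hvolball : (3 : ENNReal) * volume (ball (0:E3) 1) = ENNReal.ofReal (3 * Br) := by
    rw [ENNReal.ofReal_mul (by norm_num), ENNReal.ofReal_ofNat,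
      hBrdef, ENNReal.ofReal_toReal measure_ball_lt_top.ne]
  have hT1a : ∫⁻ q, (ball p₁ (2*d)).indicator f₁ q = ENNReal.ofReal (3*Br*(C*(2*d))) := by
    rw [hf₁, near_bound p₁ C (2*d), hvolball, ← ENNReal.ofReal_mul (by positivity),
      ← ENNReal.ofReal_mul (by positivity)]
  have hT1b : ∫⁻ q, (ball p₁ (2*d)).indicator f₂ q ≤ ENNReal.ofReal (3*Br*(C*(3*d))) := by
    have hss : ball p₁ (2*d) ⊆ ball p₂ (3*d) := by
      intro q hq
      rw [mem_ball] at hq ⊢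
      calc dist q p₂ ≤ dist q p₁ + dist p₁ p₂ := dist_triangle _ _ _
        _ < 2*d + d := by
            apply add_lt_add_of_lt_of_le hq
            rw [dist_eq_norm, ← hddef]
        _ = 3*d := by ring
    calc ∫⁻ q, (ball p₁ (2*d)).indicator f₂ q
        ≤ ∫⁻ q, (ball p₂ (3*d)).indicator f₂ q :=
          lintegral_mono (indicator_le_indicator_of_subset hss (fun _ => zero_le))
      _ = ENNReal.ofReal (3*Br*(C*(3*d))) := by
          rw [hf₂, near_bound p₂ C (3*d), hvolball, ← ENNReal.ofReal_mul (by positivity),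
            ← ENNReal.ofReal_mul (by positivity)]
  set m : ℝ := max 0 (Real.log R - Real.log (2*d)) with hmdef
  have hT2 : ∫⁻ q, ({q : E3 | ‖q - p₁‖ ∈ Icc (2*d) R}).indicator f₃ q
      ≤ ENNReal.ofReal (3*Br*((8*C*d)*m)) := by
    by_cases hRd : 2*d ≤ R
    · rw [hf₃, far_bound p₁ (2*d) R (8*C*d) (by linarith) hRd (by positivity), hvolball,
        ← ENNReal.ofReal_mul (by positivity), ← ENNReal.ofReal_mul (by positivity)]
      apply ENNReal.ofReal_le_ofReal
      have : Real.log R - Real.log (2*d) ≤ m := le_max_right _ _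
      nlinarith [mul_nonneg (mul_nonneg hBr hC.le) hd.le]
    · have hempty : {q : E3 | ‖q - p₁‖ ∈ Icc (2*d) R} = ∅ := by
        apply eq_empty_iff_forall_notMem.2
        intro q hq
        exact hRd (le_trans hq.1 hq.2)
      rw [hempty]
      simp
  -- put it together
  have hmain : (∫⁻ q in Ω, ENNReal.ofReal ‖H p₁ q - H p₂ q‖)
      ≤ ENNReal.ofReal (C' * qlLambda d) := by
    calc (∫⁻ q in Ω, ENNReal.ofReal ‖H p₁ q - H p₂ q‖)
        ≤ ∫⁻ q in Ω, G q := lintegral_mono_ae haeb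
      _ ≤ ∫⁻ q, G q := lintegral_mono' Measure.restrict_le_self le_rfl
      _ = (∫⁻ q, (ball p₁ (2*d)).indicator f₁ q + (ball p₁ (2*d)).indicator f₂ q)
            + ∫⁻ q, ({q : E3 | ‖q - p₁‖ ∈ Icc (2*d) R}).indicator f₃ q := by
          rw [hG]; exact lintegral_add_left (hmf₁.add hmf₂) _
      _ = ((∫⁻ q, (ball p₁ (2*d)).indicator f₁ q) + ∫⁻ q, (ball p₁ (2*d)).indicator f₂ q)
            + ∫⁻ q, ({q : E3 | ‖q - p₁‖ ∈ Icc (2*d) R}).indicator f₃ q := by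
          rw [lintegral_add_left hmf₁]
      _ ≤ (ENNReal.ofReal (3*Br*(C*(2*d))) + ENNReal.ofReal (3*Br*(C*(3*d))))
            + ENNReal.ofReal (3*Br*((8*C*d)*m)) := by
          exact add_le_add (add_le_add hT1a.le hT1b) hT2
      _ = ENNReal.ofReal (3*Br*(C*(2*d)) + 3*Br*(C*(3*d)) + 3*Br*(8*C*d*m)) := by
          rw [← ENNReal.ofReal_add (by positivity) (by positivity),
            ← ENNReal.ofReal_add (by positivity) (by positivity)]
      _ ≤ ENNReal.ofReal (C' * qlLambda d) := by
          apply ENNReal.ofReal_le_ofReal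
          rw [hC'def, hMdef]
          exact final_real C Br R d hC hBr hd hdR
  -- convert to the Bochner integral
  have hIeq : (∫ q in Ω, ‖H p₁ q - H p₂ q‖)
      = (∫⁻ q in Ω, ENNReal.ofReal ‖H p₁ q - H p₂ q‖).toReal := by
    apply integral_eq_lintegral_of_nonneg_ae
    · exact ae_of_all _ (fun q => norm_nonneg _)
    · exact ((hHmeas p₁).sub (hHmeas p₂)).norm
  rw [hIeq]
  exact ENNReal.toReal_le_of_le_ofReal
    (mul_nonneg hC'pos.le (qlLambda_nonneg (norm_nonneg _))) hmain
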